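/- For z > 0 and γ > 0, set X(ω) = [(2 + z/(2γ))/(1 + e^{2πiω})] · (1 − √(1 − (cos(πω)/(1 + z/(4γ)))²)) for ω ∈ (−1/2, 1/2). Then |X(ω)| < 1 for all such ω. -/

import Mathlib

open Real Complex

/-- For `z, γ > 0`, the geometric ratio
`X(ω) = [(2 + z/(2γ))/(1 + e^{2πiω})] (1 − √(1 − (cos(πω)/(1 + z/(4γ)))²))`
satisfies `|X(ω)| < 1` for all `ω ∈ (−1/2, 1/2)`. -/
theorem geometric_ratio_lt_one (z γ : ℝ) (hz : 0 < z) (hγ : 0 < γ) :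
    ∀ ω ∈ Set.Ioo (-(1:ℝ)/2) (1/2),
      ‖((((2 + z / (2 * γ) : ℝ) : ℂ) / (1 + Complex.exp (2 * π * Complex.I * (ω : ℂ)))) *
          ((1 : ℂ) -
            ((Real.sqrt (1 - (Real.cos (π * ω) / (1 + z / (4 * γ))) ^ 2) : ℝ) : ℂ)))‖ < 1 := by
  intro ω hω
  obtain ⟨hω1, hω2⟩ := hω
  set a : ℝ := 1 + z / (4 * γ) with ha_def
  set c : ℝ := Real.cos (π * ω) with hc_def
  set s : ℝ := Real.sqrt (1 - (c / a) ^ 2) with hs_def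
  have ha : 1 < a := by
    have : 0 < z / (4 * γ) := div_pos hz (by linarith)
    simp [ha_def]; linarith
  have ha0 : 0 < a := by linarith
  have hc : 0 < c := by
    apply Real.cos_pos_of_mem_Ioo
    constructor
    · nlinarith [Real.pi_pos]
    · nlinarith [Real.pi_pos]
  have hc1 : c ≤ 1 := Real.cos_le_one _
  have hca : c < a := lt_of_le_of_lt hc1 ha
  have hca2 : (c / a) ^ 2 < 1 := by
    rw [div_pow, div_lt_one (by positivity)]
    nlinarith
  have hs0 : 0 ≤ s := Real.sqrt_nonneg _
  have hs2 : s ^ 2 = 1 - (c / a) ^ 2 := Real.sq_sqrt (by linarith)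
  have hs2' : a ^ 2 * s ^ 2 = a ^ 2 - c ^ 2 := by
    rw [hs2]; field_simp
  have hs1 : s < 1 := by
    rw [hs_def]
    exact (Real.sqrt_lt' one_pos).2 (by nlinarith)
  -- key inequality
  have key : a * (1 - s) < c := by nlinarith [mul_nonneg ha0.le hs0]
  -- compute |1 + exp(2πiω)| = 2c
  have hexp : 1 + Complex.exp (2 * π * Complex.I * (ω : ℂ)) =
      ((1 + Real.cos (2 * π * ω) : ℝ) : ℂ) + ((Real.sin (2 * π * ω) : ℝ) : ℂ) * Complex.I := by
    rw [show (2 * π * Complex.I * (ω : ℂ)) = ((2 * π * ω : ℝ) : ℂ) * Complex.I by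
      push_cast; ring]
    rw [Complex.exp_mul_I]
    push_cast [Complex.ofReal_cos, Complex.ofReal_sin]
    ring
  have habs_den : ‖1 + Complex.exp (2 * π * Complex.I * (ω : ℂ))‖ = 2 * c := by
    rw [hexp, Complex.norm_add_mul_I]
    have hcos2 : Real.cos (2 * π * ω) = 2 * c ^ 2 - 1 := by
      rw [show 2 * π * ω = 2 * (π * ω) by ring, Real.cos_two_mul]
    have hsin2 : Real.sin (2 * π * ω) ^ 2 = 1 - Real.cos (2 * π * ω) ^ 2 := by
      nlinarith [Real.sin_sq_add_cos_sq (2 * π * ω)]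
    have : (1 + Real.cos (2 * π * ω)) ^ 2 + Real.sin (2 * π * ω) ^ 2 = (2 * c) ^ 2 := by
      rw [hsin2, hcos2]; ring
    rw [this, Real.sqrt_sq (by linarith)]
  -- the sqrt factor
  have hfac : ((1 : ℂ) - ((s : ℝ) : ℂ)) = (((1 - s : ℝ)) : ℂ) := by push_cast; ring
  rw [norm_mul, norm_div, habs_den, hfac, Complex.norm_real, Complex.norm_real,
    Real.norm_eq_abs, Real.norm_eq_abs]
  have h2a : 2 + z / (2 * γ) = 2 * a := by rw [ha_def]; field_simp; ring
  rw [h2a, _root_.abs_of_pos (by linarith), _root_.abs_of_nonneg (by linarith)]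
  rw [div_mul_eq_mul_div, div_lt_one (by linarith)]
  nlinarith
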